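/- Strong Fenchel duality holds for the sketched program: min_{α ∈ ℝ^m} f(ASα) + (λ/2)‖Sα‖₂² = max_{y ∈ ℝ^n} −f*(y) − (1/(2λ))‖P_S Aᵀy‖₂², where P_S = S(SᵀS)†Sᵀ is the orthogonal projector onto range(S). There exist a sketched primal solution α* (attained) and a unique sketched dual solution y*, and for any sketched primal solution α* it holds that ASα* ∈ ∂f*(y*) and y* = ∇f(ASα*). -/

import Mathlib

open Matrix Finset Real Set

noncomputable section

namespace Sketch

/-- The ℓ2 norm of a vector in `Fin k → ℝ`. -/
def norm2 {k : ℕ} (x : Fin k → ℝ) : ℝ := Real.sqrt (∑ i, x i ^ 2)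

/-- The continuous linear functional `v ↦ ⟨w, v⟩`; used to state that a function has
gradient `w` at a point. -/
def dotCLM {k : ℕ} (w : Fin k → ℝ) : (Fin k → ℝ) →L[ℝ] ℝ :=
  LinearMap.toContinuousLinearMap
    { toFun := fun v => w ⬝ᵥ v
      map_add' := fun a b => dotProduct_add w a b
      map_smul' := fun c a => by
        simp [dotProduct, Finset.mul_sum, mul_left_comm] }

/-- The domain of the Fenchel conjugate `f*`. -/
def fenchelDom {k : ℕ} (f : (Fin k → ℝ) → ℝ) : Set (Fin k → ℝ) :=
  {z | BddAbove (Set.range fun w => w ⬝ᵥ z - f w)}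

/-- The Fenchel conjugate `f*(z) = sup_w (⟨w, z⟩ - f(w))` (as a real-valued supremum,
meaningful on `fenchelDom f`). -/
def fenchel {k : ℕ} (f : (Fin k → ℝ) → ℝ) (z : Fin k → ℝ) : ℝ :=
  ⨆ w, (w ⬝ᵥ z - f w)

/-- The subdifferential of the Fenchel conjugate `f*` at `z`. -/
def fenchelSubdiff {k : ℕ} (f : (Fin k → ℝ) → ℝ) (z : Fin k → ℝ) : Set (Fin k → ℝ) :=
  {g | ∀ y ∈ fenchelDom f, fenchel f z + g ⬝ᵥ (y - z) ≤ fenchel f y}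

/-- `P` is the orthogonal projector onto the range (column space) of `S`. -/
def IsOrthProj {q m : ℕ} (S : Matrix (Fin q) (Fin m) ℝ) (P : Matrix (Fin q) (Fin q) ℝ) : Prop :=
  Pᵀ = P ∧ P * P = P ∧ P * S = S ∧ ∃ C : Matrix (Fin m) (Fin q) ℝ, P = S * C

/-- The quantity `Z_f`: the supremum of `(Δᵀ B P⊥ Bᵀ Δ)^{1/2} / ‖Δ‖₂` over nonzero
`Δ ∈ dom f* - z*`. -/
def Zf {k q : ℕ} (f : (Fin k → ℝ) → ℝ) (B : Matrix (Fin k) (Fin q) ℝ)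
    (Pperp : Matrix (Fin q) (Fin q) ℝ) (zs : Fin k → ℝ) : ℝ :=
  sSup {r | ∃ Δ : Fin k → ℝ, Δ ≠ 0 ∧ zs + Δ ∈ fenchelDom f ∧
    r = Real.sqrt (Δ ⬝ᵥ (B * Pperp * Bᵀ).mulVec Δ) / norm2 Δ}

/-- The spectral norm (largest singular value) of a matrix. -/
def specNorm {a b : ℕ} (M : Matrix (Fin a) (Fin b) ℝ) : ℝ :=
  sSup {r | ∃ v : Fin b → ℝ, norm2 v = 1 ∧ r = norm2 (M.mulVec v)}

/-- The eigenvalues of `A * Aᵀ` (i.e. the squared singular values of `A`),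
sorted in decreasing order. -/
def eigsDesc {n d : ℕ} (A : Matrix (Fin n) (Fin d) ℝ) : Fin n → ℝ := fun i =>
  ((Matrix.isHermitian_mul_conjTranspose_self A).eigenvalues ∘
    Tuple.sort (Matrix.isHermitian_mul_conjTranspose_self A).eigenvalues) i.rev

/-- The spectral tail `R_k(A) = (σ_k² + (1/k) ∑_{j=k+1}^ρ σ_j²)^{1/2}`. -/
def Rk {n d : ℕ} (A : Matrix (Fin n) (Fin d) ℝ) (k : ℕ) : ℝ :=
  Real.sqrt ((∑ j : Fin n, if (j : ℕ) + 1 = k then eigsDesc A j else 0)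
    + (1 / (k : ℝ)) * ∑ j : Fin n, if k ≤ (j : ℕ) then eigsDesc A j else 0)

/-- Product measure on `n × m` matrices with i.i.d. standard Gaussian entries. -/
def gaussMatrix (n m : ℕ) : MeasureTheory.Measure (Fin n → Fin m → ℝ) :=
  MeasureTheory.Measure.pi fun _ => MeasureTheory.Measure.pi fun _ =>
    ProbabilityTheory.gaussianReal 0 1


/-- The largest eigenvalue (Rayleigh quotient supremum) of a symmetric matrix. -/
def eigMax {q : ℕ} (M : Matrix (Fin q) (Fin q) ℝ) : ℝ :=
  sSup {r | ∃ v : Fin q → ℝ, norm2 v = 1 ∧ r = v ⬝ᵥ M.mulVec v}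

/-- The smallest eigenvalue (Rayleigh quotient infimum) of a symmetric matrix. -/
def eigMin {q : ℕ} (M : Matrix (Fin q) (Fin q) ℝ) : ℝ :=
  sInf {r | ∃ v : Fin q → ℝ, norm2 v = 1 ∧ r = v ⬝ᵥ M.mulVec v}



/-! ### Auxiliary lemmas -/

lemma dotCLM_apply' {k : ℕ} (w v : Fin k → ℝ) : dotCLM w v = w ⬝ᵥ v := rfl

lemma dot_self_eq {k : ℕ} (x : Fin k → ℝ) : x ⬝ᵥ x = ∑ i, x i ^ 2 := by
  simp [dotProduct, sq]

lemma dot_self_nonneg {k : ℕ} (x : Fin k → ℝ) : 0 ≤ x ⬝ᵥ x := by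
  rw [dot_self_eq]; exact Finset.sum_nonneg fun i _ => sq_nonneg _

lemma norm2_sq_eq {k : ℕ} (x : Fin k → ℝ) : norm2 x ^ 2 = x ⬝ᵥ x := by
  rw [norm2, Real.sq_sqrt (Finset.sum_nonneg fun i _ => sq_nonneg _), dot_self_eq]

lemma mulVec_dot {a b : ℕ} (A : Matrix (Fin a) (Fin b) ℝ) (x : Fin b → ℝ) (y : Fin a → ℝ) :
    (A *ᵥ x) ⬝ᵥ y = x ⬝ᵥ (Aᵀ *ᵥ y) := by
  rw [Matrix.dotProduct_mulVec, Matrix.vecMul_transpose]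

lemma amgm {k : ℕ} {lam : ℝ} (hlam : 0 < lam) (u v : Fin k → ℝ) :
    -(u ⬝ᵥ v) ≤ lam / 2 * (u ⬝ᵥ u) + 1 / (2 * lam) * (v ⬝ᵥ v) := by
  have h0 : 0 ≤ (lam • u + v) ⬝ᵥ (lam • u + v) := dot_self_nonneg _
  have hexp : (lam • u + v) ⬝ᵥ (lam • u + v)
      = lam * lam * (u ⬝ᵥ u) + 2 * lam * (u ⬝ᵥ v) + v ⬝ᵥ v := by
    simp [add_dotProduct, dotProduct_add, smul_dotProduct,
      dotProduct_smul, dotProduct_comm v u, smul_eq_mul]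
    ring
  rw [hexp] at h0
  have h2 : 0 < 2 * lam := by linarith
  have h3 : (2 * lam) * (lam / 2 * (u ⬝ᵥ u) + 1 / (2 * lam) * (v ⬝ᵥ v) + u ⬝ᵥ v)
      = lam * lam * (u ⬝ᵥ u) + 2 * lam * (u ⬝ᵥ v) + v ⬝ᵥ v := by
    field_simp; ring
  have h4 : 0 ≤ lam / 2 * (u ⬝ᵥ u) + 1 / (2 * lam) * (v ⬝ᵥ v) + u ⬝ᵥ v :=
    (mul_nonneg_iff_of_pos_left h2).mp (h3 ▸ h0)
  linarith

lemma le_fenchel {k : ℕ} {f : (Fin k → ℝ) → ℝ} {y : Fin k → ℝ}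
    (hy : y ∈ fenchelDom f) (w : Fin k → ℝ) : w ⬝ᵥ y - f w ≤ fenchel f y :=
  le_ciSup hy w

section DiffConvex

variable {n : ℕ} {f : (Fin n → ℝ) → ℝ} {f' : (Fin n → ℝ) → Fin n → ℝ}

lemma hasDerivAt_line (hdiff : ∀ w, HasFDerivAt f (dotCLM (f' w)) w)
    (u v : Fin n → ℝ) (t : ℝ) :
    HasDerivAt (fun s : ℝ => f (u + s • v)) (f' (u + t • v) ⬝ᵥ v) t := by
  have hl : HasDerivAt (fun s : ℝ => u + s • v) v t := by
    simpa using ((hasDerivAt_id t).smul_const v).const_add u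
  have := (hdiff (u + t • v)).comp_hasDerivAt t hl
  simp only [dotCLM_apply'] at this
  exact this

lemma grad_ineq (hconv : ConvexOn ℝ Set.univ f)
    (hdiff : ∀ w, HasFDerivAt f (dotCLM (f' w)) w) (u w : Fin n → ℝ) :
    f u + f' u ⬝ᵥ (w - u) ≤ f w := by
  set φ : ℝ → ℝ := fun t => f (u + t • (w - u)) with hφ
  have hconvφ : ConvexOn ℝ Set.univ φ := by
    have h := hconv.comp_affineMap (AffineMap.lineMap u w)
    have heq : (f ∘ ⇑(AffineMap.lineMap u w)) = φ := by
      funext s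
      simp [hφ, AffineMap.lineMap_apply, add_comm]
    rw [heq] at h
    simpa using h
  have hd0 : HasDerivAt φ (f' u ⬝ᵥ (w - u)) 0 := by
    have := hasDerivAt_line hdiff u (w - u) 0
    simpa using this
  have hslope := hconvφ.deriv_le_slope (Set.mem_univ (0:ℝ)) (Set.mem_univ (1:ℝ))
    zero_lt_one hd0.differentiableAt
  rw [hd0.deriv] at hslope
  have hs : slope φ 0 1 = φ 1 - φ 0 := by simp [slope_def_field]
  have h0 : φ 0 = f u := by simp [hφ]
  have h1 : φ 1 = f w := by simp [hφ]
  rw [hs, h0, h1] at hslope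
  linarith

lemma subgrad_unique (hdiff : ∀ w, HasFDerivAt f (dotCLM (f' w)) w)
    (u y' : Fin n → ℝ) (h : ∀ w, w ⬝ᵥ y' - f w ≤ u ⬝ᵥ y' - f u) : y' = f' u := by
  have key : ∀ v : Fin n → ℝ, f' u ⬝ᵥ v = y' ⬝ᵥ v := by
    intro v
    set ψ : ℝ → ℝ := fun t => f (u + t • v) - t * (y' ⬝ᵥ v) with hψ
    have hmin : ∀ t, ψ 0 ≤ ψ t := by
      intro t
      have hw := h (u + t • v)
      have hx : (u + t • v) ⬝ᵥ y' = u ⬝ᵥ y' + t * (v ⬝ᵥ y') := by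
        simp [add_dotProduct, smul_dotProduct, smul_eq_mul]
      have hcomm : v ⬝ᵥ y' = y' ⬝ᵥ v := dotProduct_comm v y'
      simp only [hψ]
      simp only [hx, hcomm] at hw ⊢
      simp only [zero_smul, add_zero, zero_mul, sub_zero]
      linarith
    have hd : HasDerivAt ψ (f' u ⬝ᵥ v - y' ⬝ᵥ v) 0 := by
      have h1 : HasDerivAt (fun t : ℝ => f (u + t • v)) (f' u ⬝ᵥ v) 0 := by
        simpa using hasDerivAt_line hdiff u v 0
      exact h1.sub (hasDerivAt_mul_const (y' ⬝ᵥ v))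
    have hloc : IsLocalMin ψ 0 := Filter.Eventually.of_forall hmin
    have hz := hloc.hasDerivAt_eq_zero hd
    linarith [hz]
  funext i
  have hk := key (Pi.single i 1)
  rw [dotProduct_single, dotProduct_single, mul_one, mul_one] at hk
  exact hk.symm

lemma fenchel_at_grad (hconv : ConvexOn ℝ Set.univ f)
    (hdiff : ∀ w, HasFDerivAt f (dotCLM (f' w)) w) (u : Fin n → ℝ) :
    BddAbove (Set.range fun w => w ⬝ᵥ f' u - f w) ∧
      (⨆ w, (w ⬝ᵥ f' u - f w)) = u ⬝ᵥ f' u - f u := by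
  have hub : ∀ w, w ⬝ᵥ f' u - f w ≤ u ⬝ᵥ f' u - f u := by
    intro w
    have hgi := grad_ineq hconv hdiff u w
    have h1 : f' u ⬝ᵥ (w - u) = f' u ⬝ᵥ w - f' u ⬝ᵥ u := dotProduct_sub _ _ _
    have h2 : f' u ⬝ᵥ w = w ⬝ᵥ f' u := dotProduct_comm _ _
    have h3 : f' u ⬝ᵥ u = u ⬝ᵥ f' u := dotProduct_comm _ _
    rw [h1, h2, h3] at hgi
    linarith
  have hbdd : BddAbove (Set.range fun w => w ⬝ᵥ f' u - f w) :=
    ⟨u ⬝ᵥ f' u - f u, Set.forall_mem_range.mpr hub⟩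
  exact ⟨hbdd, le_antisymm (ciSup_le hub) (le_ciSup hbdd u)⟩

lemma exists_min {d m : ℕ}
    (hconv : ConvexOn ℝ Set.univ f)
    (hdiff : ∀ w, HasFDerivAt f (dotCLM (f' w)) w)
    (A : Matrix (Fin n) (Fin d) ℝ) {lam : ℝ} (hlam : 0 < lam)
    (S : Matrix (Fin d) (Fin m) ℝ) :
    ∃ αs : Fin m → ℝ, ∀ β : Fin m → ℝ,
      f (A *ᵥ (S *ᵥ αs)) + lam / 2 * ((S *ᵥ αs) ⬝ᵥ (S *ᵥ αs))
        ≤ f (A *ᵥ (S *ᵥ β)) + lam / 2 * ((S *ᵥ β) ⬝ᵥ (S *ᵥ β)) := by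
  set g : (Fin d → ℝ) → ℝ := fun u => f (A *ᵥ u) + lam / 2 * (u ⬝ᵥ u) with hg
  have hfc : Continuous f := continuous_iff_continuousAt.2 fun w => (hdiff w).continuousAt
  have hAc : Continuous fun u : Fin d → ℝ => A *ᵥ u := by
    have heq : (fun u : Fin d → ℝ => A *ᵥ u) = ⇑(Matrix.mulVecLin A) := by
      funext u; simp [Matrix.mulVecLin_apply]
    rw [heq]; exact LinearMap.continuous_of_finiteDimensional _
  have hdotc : Continuous fun u : Fin d → ℝ => u ⬝ᵥ u := by
    simp only [dotProduct]
    exact continuous_finset_sum _ fun i _ =>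
      (continuous_apply i).mul (continuous_apply i)
  have hgc : Continuous g := ((hfc.comp hAc).add (continuous_const.mul hdotc))
  set c : Fin d → ℝ := Aᵀ *ᵥ f' 0 with hc
  set D : ℝ := 1 / (2 * (lam / 2)) * (c ⬝ᵥ c) with hD
  have hD0 : 0 ≤ D := by
    have hpos : 0 < 1 / (2 * (lam / 2)) := by positivity
    exact mul_nonneg hpos.le (dot_self_nonneg c)
  have hlower : ∀ u : Fin d → ℝ, f 0 + lam / 4 * (u ⬝ᵥ u) - D ≤ g u := by
    intro u
    have h1 : f 0 + f' 0 ⬝ᵥ (A *ᵥ u - 0) ≤ f (A *ᵥ u) := grad_ineq hconv hdiff 0 _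
    have h2 : f' 0 ⬝ᵥ (A *ᵥ u - 0) = u ⬝ᵥ c := by
      rw [sub_zero, dotProduct_comm, mulVec_dot]
    have h3 : -(u ⬝ᵥ c) ≤ lam / 2 / 2 * (u ⬝ᵥ u) + 1 / (2 * (lam / 2)) * (c ⬝ᵥ c) := by
      have := amgm (half_pos hlam) u c
      linarith [this]
    rw [h2] at h1
    simp only [hg, hD]
    have h4 : lam / 2 / 2 = lam / 4 := by ring
    rw [h4] at h3
    linarith
  set R : ℝ := 4 * D / lam + 1 with hR
  have hR0 : 0 < R := by positivity
  set V : Set (Fin d → ℝ) := Set.range (S.mulVec) with hV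
  have hVclosed : IsClosed V := by
    have heq : V = (LinearMap.range (Matrix.mulVecLin S) : Submodule ℝ (Fin d → ℝ)) := by
      ext u; simp [hV, LinearMap.mem_range, Matrix.mulVecLin_apply]
    rw [heq]
    exact Submodule.closed_of_finiteDimensional _
  set K : Set (Fin d → ℝ) := V ∩ {u | u ⬝ᵥ u ≤ R} with hK
  have hKclosed : IsClosed K :=
    hVclosed.inter (isClosed_le hdotc continuous_const)
  have hKbdd : Bornology.IsBounded K := by
    apply (Metric.isBounded_closedBall (x := (0 : Fin d → ℝ)) (r := Real.sqrt R)).subset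
    intro u hu
    rw [Metric.mem_closedBall, dist_zero_right]
    rw [pi_norm_le_iff_of_nonneg (Real.sqrt_nonneg R)]
    intro i
    have hui : u i ^ 2 ≤ R := by
      have hle : u i ^ 2 ≤ u ⬝ᵥ u := by
        rw [dot_self_eq]
        exact Finset.single_le_sum (fun j _ => sq_nonneg (u j)) (Finset.mem_univ i)
      exact hle.trans hu.2
    calc ‖u i‖ = Real.sqrt (u i ^ 2) := by
          rw [Real.sqrt_sq_eq_abs]; rfl
      _ ≤ Real.sqrt R := Real.sqrt_le_sqrt hui
  have hKcomp : IsCompact K := Metric.isCompact_of_isClosed_isBounded hKclosed hKbdd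
  have h0K : (0 : Fin d → ℝ) ∈ K := by
    refine ⟨⟨0, Matrix.mulVec_zero S⟩, ?_⟩
    simp [dotProduct]
    positivity
  obtain ⟨u0, hu0K, hmin⟩ := hKcomp.exists_isMinOn ⟨0, h0K⟩ hgc.continuousOn
  have hglobal : ∀ u ∈ V, g u0 ≤ g u := by
    intro u huV
    by_cases hu : u ⬝ᵥ u ≤ R
    · exact hmin ⟨huV, hu⟩
    · push_neg at hu
      have hgu : g 0 < g u := by
        have hg0 : g 0 = f 0 := by simp [hg, Matrix.mulVec_zero, dotProduct]
        rw [hg0]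
        have hRD : 0 < lam / 4 * R - D := by
          rw [hR]
          have he : lam / 4 * (4 * D / lam + 1) = D + lam / 4 := by field_simp
          rw [he]; linarith
        set X : ℝ := u ⬝ᵥ u with hX
        have hlu : f 0 + lam / 4 * X - D ≤ g u := hlower u
        have hmono : lam / 4 * R < lam / 4 * X :=
          mul_lt_mul_of_pos_left hu (by positivity : (0:ℝ) < lam / 4)
        clear_value X R D g
        linarith
      exact le_of_lt (lt_of_le_of_lt (hmin h0K) hgu)
  obtain ⟨αs, hαs⟩ := hu0K.1
  refine ⟨αs, fun β => ?_⟩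
  have h1 : g (S *ᵥ αs) ≤ g (S *ᵥ β) := by
    rw [hαs]; exact hglobal _ ⟨β, rfl⟩
  simpa [hg] using h1

end DiffConvex

/-- Fenchel duality for the sketched program: strong duality, attainment
of a sketched primal solution `αs`, existence and uniqueness of the sketched dual solution
`ys`, and for every sketched primal minimizer `α'`, `A S α' ∈ ∂f*(ys)` and
`ys = ∇f(A S α')`. -/
theorem statement_1 {n d m : ℕ} (f : (Fin n → ℝ) → ℝ) (f' : (Fin n → ℝ) → Fin n → ℝ)
    (A : Matrix (Fin n) (Fin d) ℝ) (μ lam : ℝ)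
    (hμ : 0 < μ) (hlam : 0 < lam)
    (hconv : ConvexOn ℝ Set.univ f)
    (hdiff : ∀ w, HasFDerivAt f (dotCLM (f' w)) w)
    (hsmooth : ∀ w v, norm2 (f' w - f' v) ≤ μ * norm2 (w - v))
    (S : Matrix (Fin d) (Fin m) ℝ) (P : Matrix (Fin d) (Fin d) ℝ)
    (hP : IsOrthProj S P) :
    ∃ αs : Fin m → ℝ,
      (∀ α : Fin m → ℝ,
        f ((A * S).mulVec αs) + lam / 2 * norm2 (S.mulVec αs) ^ 2
          ≤ f ((A * S).mulVec α) + lam / 2 * norm2 (S.mulVec α) ^ 2) ∧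
      ∃ ys : Fin n → ℝ, ys ∈ fenchelDom f ∧
        (∀ y ∈ fenchelDom f,
          -(fenchel f y) - 1 / (2 * lam) * norm2 ((P * Aᵀ).mulVec y) ^ 2
            ≤ -(fenchel f ys) - 1 / (2 * lam) * norm2 ((P * Aᵀ).mulVec ys) ^ 2) ∧
        (∀ y' ∈ fenchelDom f,
          (∀ y ∈ fenchelDom f,
            -(fenchel f y) - 1 / (2 * lam) * norm2 ((P * Aᵀ).mulVec y) ^ 2
              ≤ -(fenchel f y') - 1 / (2 * lam) * norm2 ((P * Aᵀ).mulVec y') ^ 2) → y' = ys) ∧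
        (f ((A * S).mulVec αs) + lam / 2 * norm2 (S.mulVec αs) ^ 2
          = -(fenchel f ys) - 1 / (2 * lam) * norm2 ((P * Aᵀ).mulVec ys) ^ 2) ∧
        (∀ α' : Fin m → ℝ,
          (∀ α, f ((A * S).mulVec α') + lam / 2 * norm2 (S.mulVec α') ^ 2
              ≤ f ((A * S).mulVec α) + lam / 2 * norm2 (S.mulVec α) ^ 2) →
          (A * S).mulVec α' ∈ fenchelSubdiff f ys ∧ ys = f' ((A * S).mulVec α')) := by
  classical
  obtain ⟨hPt, hPP, hPS, C, hPC⟩ := hP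
  obtain ⟨αs, hαs⟩ := exists_min hconv hdiff A hlam S
  have hobj : ∀ α : Fin m → ℝ,
      f ((A * S) *ᵥ α) + lam / 2 * norm2 (S *ᵥ α) ^ 2
        = f (A *ᵥ (S *ᵥ α)) + lam / 2 * ((S *ᵥ α) ⬝ᵥ (S *ᵥ α)) := by
    intro α
    rw [norm2_sq_eq, ← Matrix.mulVec_mulVec]
  have hPfix : ∀ β : Fin m → ℝ, P *ᵥ (S *ᵥ β) = S *ᵥ β := by
    intro β
    rw [Matrix.mulVec_mulVec, hPS]
  have hPker : ∀ x : Fin d → ℝ, Sᵀ *ᵥ x = 0 → P *ᵥ x = 0 := by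
    intro x hx
    have hPeq : P = Cᵀ * Sᵀ := by rw [← hPt, hPC, Matrix.transpose_mul]
    rw [hPeq, ← Matrix.mulVec_mulVec, hx, Matrix.mulVec_zero]
  have hproj : ∀ (β : Fin m → ℝ) (y : Fin n → ℝ),
      (A *ᵥ (S *ᵥ β)) ⬝ᵥ y = (S *ᵥ β) ⬝ᵥ ((P * Aᵀ) *ᵥ y) := by
    intro β y
    calc (A *ᵥ (S *ᵥ β)) ⬝ᵥ y = (S *ᵥ β) ⬝ᵥ (Aᵀ *ᵥ y) := mulVec_dot A _ y
      _ = (P *ᵥ (S *ᵥ β)) ⬝ᵥ (Aᵀ *ᵥ y) := by rw [hPfix]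
      _ = (S *ᵥ β) ⬝ᵥ (Pᵀ *ᵥ (Aᵀ *ᵥ y)) := mulVec_dot P _ _
      _ = (S *ᵥ β) ⬝ᵥ ((P * Aᵀ) *ᵥ y) := by rw [hPt, Matrix.mulVec_mulVec]
  set u0 : Fin d → ℝ := S *ᵥ αs with hu0
  clear_value u0
  have hfoc : ∀ v : Fin m → ℝ,
      f' (A *ᵥ u0) ⬝ᵥ (A *ᵥ (S *ᵥ v)) + lam * (u0 ⬝ᵥ (S *ᵥ v)) = 0 := by
    intro v
    set sv : Fin d → ℝ := S *ᵥ v with hsv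
    clear_value sv
    have hline : ∀ t : ℝ, u0 + t • sv = S *ᵥ (αs + t • v) := by
      intro t
      rw [Matrix.mulVec_add, Matrix.mulVec_smul, ← hu0, ← hsv]
    have hmin : ∀ t : ℝ,
        f (A *ᵥ (u0 + (0:ℝ) • sv)) + lam / 2 * ((u0 + (0:ℝ) • sv) ⬝ᵥ (u0 + (0:ℝ) • sv))
          ≤ f (A *ᵥ (u0 + t • sv)) + lam / 2 * ((u0 + t • sv) ⬝ᵥ (u0 + t • sv)) := by
      intro t
      have e0 : u0 + (0:ℝ) • sv = u0 := by rw [zero_smul, add_zero]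
      rw [e0, hline t]
      exact hαs (αs + t • v)
    have hquad : ∀ t : ℝ, (u0 + t • sv) ⬝ᵥ (u0 + t • sv)
        = u0 ⬝ᵥ u0 + 2 * t * (u0 ⬝ᵥ sv) + t ^ 2 * (sv ⬝ᵥ sv) := by
      intro t
      simp only [add_dotProduct, dotProduct_add, smul_dotProduct,
        dotProduct_smul, smul_eq_mul, dotProduct_comm sv u0]
      ring
    have hd1 : HasDerivAt (fun t : ℝ => f (A *ᵥ (u0 + t • sv)))
        (f' (A *ᵥ u0) ⬝ᵥ (A *ᵥ sv)) 0 := by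
      have h := hasDerivAt_line hdiff (A *ᵥ u0) (A *ᵥ sv) 0
      have heq : (fun s : ℝ => f (A *ᵥ u0 + s • (A *ᵥ sv)))
          = fun s : ℝ => f (A *ᵥ (u0 + s • sv)) := by
        funext s; rw [Matrix.mulVec_add, Matrix.mulVec_smul]
      rw [heq] at h
      simpa using h
    have hd2 : HasDerivAt (fun t : ℝ =>
        lam / 2 * ((u0 + t • sv) ⬝ᵥ (u0 + t • sv))) (lam * (u0 ⬝ᵥ sv)) 0 := by
      have h1 : HasDerivAt (fun t : ℝ =>
          u0 ⬝ᵥ u0 + 2 * t * (u0 ⬝ᵥ sv) + t ^ 2 * (sv ⬝ᵥ sv)) (2 * (u0 ⬝ᵥ sv)) 0 := by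
        have ha := hasDerivAt_const (0:ℝ) (u0 ⬝ᵥ u0)
        have hb := ((hasDerivAt_id (0:ℝ)).const_mul (2:ℝ)).mul_const (u0 ⬝ᵥ sv)
        have hc := (hasDerivAt_pow 2 (0:ℝ)).mul_const (sv ⬝ᵥ sv)
        have h := (ha.add hb).add hc
        refine h.congr_deriv ?_
        norm_num
      have h2 := h1.const_mul (lam / 2)
      have heq : (fun t : ℝ => lam / 2 *
          (u0 ⬝ᵥ u0 + 2 * t * (u0 ⬝ᵥ sv) + t ^ 2 * (sv ⬝ᵥ sv)))
          = fun t : ℝ => lam / 2 * ((u0 + t • sv) ⬝ᵥ (u0 + t • sv)) := by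
        funext t; rw [hquad t]
      rw [heq] at h2
      refine h2.congr_deriv ?_
      ring
    have hdΦ : HasDerivAt (fun t : ℝ =>
        f (A *ᵥ (u0 + t • sv)) + lam / 2 * ((u0 + t • sv) ⬝ᵥ (u0 + t • sv)))
        (f' (A *ᵥ u0) ⬝ᵥ (A *ᵥ sv) + lam * (u0 ⬝ᵥ sv)) 0 := hd1.add hd2
    have hloc : IsLocalMin (fun t : ℝ =>
        f (A *ᵥ (u0 + t • sv)) + lam / 2 * ((u0 + t • sv) ⬝ᵥ (u0 + t • sv))) 0 :=
      Filter.Eventually.of_forall hmin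
    exact hloc.hasDerivAt_eq_zero hdΦ
  set ys : Fin n → ℝ := f' (A *ᵥ u0) with hys
  clear_value ys
  have hST : Sᵀ *ᵥ (Aᵀ *ᵥ ys + lam • u0) = 0 := by
    funext i
    simp only [Pi.zero_apply]
    have hval : Pi.single i (1:ℝ) ⬝ᵥ (Sᵀ *ᵥ (Aᵀ *ᵥ ys + lam • u0))
        = (Sᵀ *ᵥ (Aᵀ *ᵥ ys + lam • u0)) i := single_one_dotProduct i _
    rw [← hval, ← mulVec_dot S]
    have h4 := hfoc (Pi.single i (1:ℝ))
    have e1 : (S *ᵥ Pi.single i (1:ℝ)) ⬝ᵥ (Aᵀ *ᵥ ys)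
        = ys ⬝ᵥ (A *ᵥ (S *ᵥ Pi.single i (1:ℝ))) := by
      rw [← mulVec_dot A]
      exact dotProduct_comm _ _
    have e2 : (S *ᵥ Pi.single i (1:ℝ)) ⬝ᵥ (lam • u0)
        = lam * (u0 ⬝ᵥ (S *ᵥ Pi.single i (1:ℝ))) := by
      rw [dotProduct_smul, smul_eq_mul, dotProduct_comm]
    rw [dotProduct_add, e1, e2]
    exact h4
  have hPu0 : P *ᵥ u0 = u0 := by rw [hu0]; exact hPfix αs
  have hKey : (P * Aᵀ) *ᵥ ys = -(lam • u0) := by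
    have hPx : P *ᵥ (Aᵀ *ᵥ ys + lam • u0) = 0 := hPker _ hST
    have h1 : P *ᵥ (Aᵀ *ᵥ ys) + lam • u0 = 0 := by
      rwa [Matrix.mulVec_add, Matrix.mulVec_smul, hPu0] at hPx
    rw [← Matrix.mulVec_mulVec]
    exact eq_neg_of_add_eq_zero_left h1
  have hfg := fenchel_at_grad hconv hdiff (A *ᵥ u0)
  rw [← hys] at hfg
  have hdom : ys ∈ fenchelDom f := hfg.1
  have hfen : fenchel f ys = (A *ᵥ u0) ⬝ᵥ ys - f (A *ᵥ u0) := hfg.2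
  have huAy : (A *ᵥ u0) ⬝ᵥ ys = -(lam * (u0 ⬝ᵥ u0)) := by
    have h := hproj αs ys
    rw [← hu0] at h
    rw [h, hKey, dotProduct_neg, dotProduct_smul, smul_eq_mul]
  have hnn : norm2 ((P * Aᵀ) *ᵥ ys) ^ 2 = lam ^ 2 * (u0 ⬝ᵥ u0) := by
    rw [norm2_sq_eq, hKey]
    rw [neg_dotProduct, dotProduct_neg, neg_neg, smul_dotProduct,
      dotProduct_smul, smul_eq_mul, smul_eq_mul]
    ring
  have hlne : lam ≠ 0 := ne_of_gt hlam
  have hstrong : f (A *ᵥ u0) + lam / 2 * (u0 ⬝ᵥ u0)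
      = -(fenchel f ys) - 1 / (2 * lam) * norm2 ((P * Aᵀ) *ᵥ ys) ^ 2 := by
    rw [hfen, huAy, hnn]
    field_simp
    ring
  have hweak : ∀ y ∈ fenchelDom f, ∀ β : Fin m → ℝ,
      -(fenchel f y) - 1 / (2 * lam) * norm2 ((P * Aᵀ) *ᵥ y) ^ 2
        ≤ f (A *ᵥ (S *ᵥ β)) + lam / 2 * ((S *ᵥ β) ⬝ᵥ (S *ᵥ β)) := by
    intro y hy β
    have h1 : (A *ᵥ (S *ᵥ β)) ⬝ᵥ y - f (A *ᵥ (S *ᵥ β)) ≤ fenchel f y :=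
      le_fenchel hy _
    have h2 := amgm hlam (S *ᵥ β) ((P * Aᵀ) *ᵥ y)
    have h3 := hproj β y
    rw [norm2_sq_eq]
    linarith
  have hPV : f ((A * S) *ᵥ αs) + lam / 2 * norm2 (S *ᵥ αs) ^ 2
      = f (A *ᵥ u0) + lam / 2 * (u0 ⬝ᵥ u0) := by
    rw [hobj αs, ← hu0]
  refine ⟨αs, ?_, ys, hdom, ?_, ?_, ?_, ?_⟩
  · intro α
    rw [hobj αs, hobj α, ← hu0]
    exact hαs α
  · intro y hy
    have h := hweak y hy αs
    rw [← hu0] at h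
    rw [← hstrong]
    exact h
  · intro y' hy' hmax'
    have hle2 : -(fenchel f y') - 1 / (2 * lam) * norm2 ((P * Aᵀ) *ᵥ y') ^ 2
        ≤ f (A *ᵥ u0) + lam / 2 * (u0 ⬝ᵥ u0) := by
      have h := hweak y' hy' αs
      rwa [← hu0] at h
    have hle1 := hmax' ys hdom
    have heqd : -(fenchel f y') - 1 / (2 * lam) * norm2 ((P * Aᵀ) *ᵥ y') ^ 2
        = f (A *ᵥ u0) + lam / 2 * (u0 ⬝ᵥ u0) := by
      linarith [hstrong]
    have h1 : (A *ᵥ u0) ⬝ᵥ y' - f (A *ᵥ u0) ≤ fenchel f y' := le_fenchel hy' _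
    have h2 := amgm hlam u0 ((P * Aᵀ) *ᵥ y')
    have h3 : (A *ᵥ u0) ⬝ᵥ y' = u0 ⬝ᵥ ((P * Aᵀ) *ᵥ y') := by
      have h := hproj αs y'
      rwa [← hu0] at h
    have hn2 : norm2 ((P * Aᵀ) *ᵥ y') ^ 2 = ((P * Aᵀ) *ᵥ y') ⬝ᵥ ((P * Aᵀ) *ᵥ y') :=
      norm2_sq_eq _
    rw [hn2] at heqd
    have hFeq : fenchel f y' = (A *ᵥ u0) ⬝ᵥ y' - f (A *ᵥ u0) := by linarith
    have hsubg : ∀ w, w ⬝ᵥ y' - f w ≤ (A *ᵥ u0) ⬝ᵥ y' - f (A *ᵥ u0) := by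
      intro w
      calc w ⬝ᵥ y' - f w ≤ fenchel f y' := le_fenchel hy' w
        _ = _ := hFeq
    have hfin := subgrad_unique hdiff (A *ᵥ u0) y' hsubg
    rw [hfin, ← hys]
  · rw [hPV]
    exact hstrong
  · intro α' hα'
    have hα'2 : ∀ α : Fin m → ℝ,
        f (A *ᵥ (S *ᵥ α')) + lam / 2 * ((S *ᵥ α') ⬝ᵥ (S *ᵥ α'))
          ≤ f (A *ᵥ (S *ᵥ α)) + lam / 2 * ((S *ᵥ α) ⬝ᵥ (S *ᵥ α)) := by
      intro α
      have h := hα' α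
      rwa [hobj α', hobj α] at h
    have hval : f (A *ᵥ (S *ᵥ α')) + lam / 2 * ((S *ᵥ α') ⬝ᵥ (S *ᵥ α'))
        = f (A *ᵥ u0) + lam / 2 * (u0 ⬝ᵥ u0) := by
      have h1 := hα'2 αs
      have h2 := hαs α'
      rw [← hu0] at h1
      linarith
    set u2 : Fin d → ℝ := S *ᵥ α' with hu2
    clear_value u2
    have hmid : A *ᵥ ((1/2 : ℝ) • (u0 + u2))
        = (1/2 : ℝ) • (A *ᵥ u0) + (1/2 : ℝ) • (A *ᵥ u2) := by
      rw [Matrix.mulVec_smul, Matrix.mulVec_add, smul_add]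
    have hSmid : S *ᵥ ((1/2 : ℝ) • (αs + α')) = (1/2 : ℝ) • (u0 + u2) := by
      rw [Matrix.mulVec_smul, Matrix.mulVec_add, ← hu0, ← hu2]
    have hcv : f ((1/2 : ℝ) • (A *ᵥ u0) + (1/2 : ℝ) • (A *ᵥ u2))
        ≤ (1/2 : ℝ) * f (A *ᵥ u0) + (1/2 : ℝ) * f (A *ᵥ u2) := by
      have h := hconv.2 (Set.mem_univ (A *ᵥ u0)) (Set.mem_univ (A *ᵥ u2))
        (by norm_num : (0:ℝ) ≤ 1/2) (by norm_num : (0:ℝ) ≤ 1/2)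
        (by norm_num : (1/2 : ℝ) + 1/2 = 1)
      simpa [smul_eq_mul] using h
    have hminmid := hαs ((1/2 : ℝ) • (αs + α'))
    rw [hSmid, hmid] at hminmid
    have hqm : ((1/2 : ℝ) • (u0 + u2)) ⬝ᵥ ((1/2 : ℝ) • (u0 + u2))
        = 1/4 * (u0 ⬝ᵥ u0) + 1/2 * (u0 ⬝ᵥ u2) + 1/4 * (u2 ⬝ᵥ u2) := by
      simp only [smul_dotProduct, dotProduct_smul, add_dotProduct,
        dotProduct_add, smul_eq_mul, dotProduct_comm u2 u0]
      ring
    rw [hqm] at hminmid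
    have hd0 : 0 ≤ (u0 - u2) ⬝ᵥ (u0 - u2) := dot_self_nonneg _
    have hdexp : (u0 - u2) ⬝ᵥ (u0 - u2)
        = u0 ⬝ᵥ u0 - 2 * (u0 ⬝ᵥ u2) + u2 ⬝ᵥ u2 := by
      simp only [sub_dotProduct, dotProduct_sub, dotProduct_comm u2 u0]
      ring
    have hlamd : lam * ((u0 - u2) ⬝ᵥ (u0 - u2)) ≤ 0 := by
      rw [hdexp]
      nlinarith [hminmid, hcv, hval]
    have hdle : (u0 - u2) ⬝ᵥ (u0 - u2) ≤ 0 := by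
      have h := hlamd
      rw [← mul_zero lam] at h
      exact le_of_mul_le_mul_left h hlam
    have hu2eq : u2 = u0 := by
      have h0 : (u0 - u2) ⬝ᵥ (u0 - u2) = 0 := le_antisymm hdle hd0
      have hz := dotProduct_self_eq_zero.mp h0
      exact (sub_eq_zero.mp hz).symm
    have hAS : (A * S) *ᵥ α' = A *ᵥ u0 := by
      rw [← Matrix.mulVec_mulVec, ← hu2, hu2eq]
    constructor
    · simp only [fenchelSubdiff, Set.mem_setOf_eq]
      intro y hy
      rw [hAS]
      have h1 : (A *ᵥ u0) ⬝ᵥ y - f (A *ᵥ u0) ≤ fenchel f y := le_fenchel hy _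
      have h2 : (A *ᵥ u0) ⬝ᵥ (y - ys) = (A *ᵥ u0) ⬝ᵥ y - (A *ᵥ u0) ⬝ᵥ ys :=
        dotProduct_sub _ _ _
      rw [h2, hfen]
      linarith
    · rw [hAS, ← hys]


end Sketch
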